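/- Let E be a group and F a finite central subgroup such that E/F is a finitely generated group containing an abelian subgroup of finite index. Then E itself contains an abelian subgroup of finite index. -/

import Mathlib

open Subgroup

/-- A group is finitely generated if it has a finite normal subgroup with
finitely generated quotient. -/
private lemma fg_of_finite_normal_fg_quotient {E : Type*} [Group E] (F : Subgroup E)
    [F.Normal] [Finite F] (hfg : Group.FG (E ⧸ F)) : Group.FG E := by
  obtain ⟨S, hS, hSfin⟩ := Group.fg_iff.mp hfg
  set T : Set E := (fun q : E ⧸ F => Quotient.out q) '' S ∪ (F : Set E) with hT
  have hTfin : T.Finite := (hSfin.image _).union (Set.toFinite _)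
  refine Group.fg_iff.mpr ⟨T, ?_, hTfin⟩
  have hmap : (Subgroup.closure T).map (QuotientGroup.mk' F) = ⊤ := by
    rw [MonoidHom.map_closure]
    refine top_le_iff.mp ?_
    rw [← hS]
    apply Subgroup.closure_mono
    intro q hq
    exact ⟨Quotient.out q, Or.inl ⟨q, hq, rfl⟩, QuotientGroup.out_eq' q⟩
  refine top_le_iff.mp fun e _ => ?_
  have he : QuotientGroup.mk' F e ∈ (Subgroup.closure T).map (QuotientGroup.mk' F) := by
    rw [hmap]; trivial
  obtain ⟨t, ht, hte⟩ := he
  have hmem : t⁻¹ * e ∈ F := by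
    have : (QuotientGroup.mk' F) (t⁻¹ * e) = 1 := by
      rw [map_mul, map_inv, hte, inv_mul_cancel]
    have h2 : t⁻¹ * e ∈ (QuotientGroup.mk' F).ker := MonoidHom.mem_ker.mpr this
    rwa [QuotientGroup.ker_mk'] at h2
  have : e = t * (t⁻¹ * e) := by group
  rw [this]
  exact mul_mem ht (Subgroup.subset_closure (Or.inr hmem))

theorem stmt_6 {E : Type*} [Group E] (F : Subgroup E) [F.Normal] [Finite F]
    (hF : F ≤ Subgroup.center E)
    (hfg : Group.FG (E ⧸ F))
    (hva : ∃ H : Subgroup (E ⧸ F), H.index ≠ 0 ∧ ∀ x ∈ H, ∀ y ∈ H, x * y = y * x) :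
    ∃ H : Subgroup E, H.index ≠ 0 ∧ ∀ x ∈ H, ∀ y ∈ H, x * y = y * x := by
  obtain ⟨H, hHi, hHab⟩ := hva
  have hEfg : Group.FG E := fg_of_finite_normal_fg_quotient F hfg
  set π := QuotientGroup.mk' F with hπ
  set K : Subgroup E := H.comap π with hKdef
  have hKi : K.index ≠ 0 := by
    rw [hKdef, hπ, H.index_comap_of_surjective (QuotientGroup.mk'_surjective F)]
    exact hHi
  haveI : K.FiniteIndex := ⟨hKi⟩
  haveI : Group.FG K := Subgroup.fg_of_index_ne_zero K
  obtain ⟨S, hSK⟩ := (Group.fg_iff_subgroup_fg K).mp this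
  have hSsub : (S : Set E) ⊆ (K : Set E) := by
    rw [← hSK]; exact Subgroup.subset_closure
  -- commutators of elements of `K` lie in `F`
  have hcomm : ∀ g ∈ K, ∀ x ∈ K, g * x * g⁻¹ * x⁻¹ ∈ F := by
    intro g hg x hx
    have h1 : π (g * x * g⁻¹ * x⁻¹) = 1 := by
      have hc := hHab (π g) (Subgroup.mem_comap.mp hg) (π x) (Subgroup.mem_comap.mp hx)
      simp only [map_mul, map_inv]
      rw [hc]
      group
    have h2 : g * x * g⁻¹ * x⁻¹ ∈ π.ker := MonoidHom.mem_ker.mpr h1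
    rwa [hπ, QuotientGroup.ker_mk'] at h2
  -- for each `x ∈ K`, the centralizer of `x` intersected with `K` has finite index
  have hCx : ∀ x ∈ K, (centralizer {x} ⊓ K).index ≠ 0 := by
    intro x hx
    have hrel : (centralizer {x}).relIndex K ≠ 0 := by
      set N : Subgroup K := (centralizer {x}).subgroupOf K with hN
      haveI : Finite (K ⧸ N) := by
        let f : K → F := fun g => ⟨(g : E) * x * (g : E)⁻¹ * x⁻¹, hcomm g g.2 x hx⟩
        have hresp : ∀ a b : ↥K, (QuotientGroup.leftRel N).r a b → f a = f b := by
          intro a b hab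
          have hab' : a⁻¹ * b ∈ N := (QuotientGroup.leftRel_apply).mp hab
          have hcent : ((a⁻¹ * b : ↥K) : E) ∈ centralizer {x} :=
            (Subgroup.mem_subgroupOf).mp hab'
          have hc : ((a:E)⁻¹ * b) * x = x * ((a:E)⁻¹ * b) :=
            Subgroup.mem_centralizer_singleton_iff.mp hcent
          apply Subtype.ext
          show (a : E) * x * (a : E)⁻¹ * x⁻¹ = (b : E) * x * (b : E)⁻¹ * x⁻¹
          have hb : (b : E) = (a : E) * ((a:E)⁻¹ * (b:E)) := by group
          rw [hb]
          have hxc : ((a:E)⁻¹ * b) * x * ((a:E)⁻¹ * b)⁻¹ = x := by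
            rw [hc]; group
          calc (a : E) * x * (a : E)⁻¹ * x⁻¹
              = (a : E) * (((a:E)⁻¹ * b) * x * ((a:E)⁻¹ * b)⁻¹) * (a:E)⁻¹ * x⁻¹ := by
                rw [hxc]
            _ = (a:E) * ((a:E)⁻¹ * (b:E)) * x * ((a:E) * ((a:E)⁻¹ * (b:E)))⁻¹ * x⁻¹ := by
                group
        let φ : K ⧸ N → F := Quotient.lift f hresp
        have hinj : Function.Injective φ := by
          intro qa qb
          refine Quotient.inductionOn₂ qa qb ?_
          intro a b hfab
          have h1 : (a : E) * x * (a : E)⁻¹ * x⁻¹ = (b : E) * x * (b : E)⁻¹ * x⁻¹ :=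
            congrArg Subtype.val hfab
          have h2 : (a : E) * x * (a : E)⁻¹ = (b : E) * x * (b : E)⁻¹ :=
            mul_right_cancel h1
          have h3 : ((a:E)⁻¹ * b) * x = x * ((a:E)⁻¹ * b) := by
            calc ((a:E)⁻¹ * b) * x
                = (a:E)⁻¹ * ((b:E) * x * (b:E)⁻¹) * (b:E) := by group
              _ = (a:E)⁻¹ * ((a:E) * x * (a:E)⁻¹) * (b:E) := by rw [h2]
              _ = x * ((a:E)⁻¹ * b) := by group
          refine Quotient.sound ?_
          refine (QuotientGroup.leftRel_apply).mpr ?_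
          refine (Subgroup.mem_subgroupOf).mpr ?_
          exact Subgroup.mem_centralizer_singleton_iff.mpr h3
        exact Finite.of_injective φ hinj
      exact Subgroup.index_ne_zero_of_finite
    have h1 : (centralizer {x} ⊓ K).relIndex K * K.index = (centralizer {x} ⊓ K).index :=
      Subgroup.relIndex_mul_index inf_le_right
    rw [Subgroup.inf_relIndex_right] at h1
    rw [← h1]
    exact Nat.mul_ne_zero hrel hKi
  -- the intersection over the finite generating set
  have main : ∀ T : Finset E, (T : Set E) ⊆ (K : Set E) →
      (K ⊓ ⨅ x ∈ T, centralizer {x}).index ≠ 0 := by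
    classical
    intro T
    induction T using Finset.induction_on with
    | empty =>
      intro _
      simpa using hKi
    | @insert a T ha ih =>
      intro hsub
      have haK : a ∈ K := hsub (T.mem_insert_self a)
      have hTK : (T : Set E) ⊆ (K : Set E) := fun y hy =>
        hsub (Finset.mem_insert_of_mem hy)
      have heq : (K ⊓ ⨅ x ∈ insert a T, centralizer {x})
          = (centralizer {a} ⊓ K) ⊓ (K ⊓ ⨅ x ∈ T, centralizer {x}) := by
        rw [Finset.iInf_insert, inf_inf_distrib_left, inf_comm K (centralizer {a})]
      rw [heq]
      exact Subgroup.index_inf_ne_zero (hCx a haK) (ih hTK)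
  refine ⟨K ⊓ ⨅ x ∈ S, centralizer {x}, main S hSsub, ?_⟩
  intro z hz w hw
  obtain ⟨hzK, hzC⟩ := Subgroup.mem_inf.mp hz
  obtain ⟨hwK, hwC⟩ := Subgroup.mem_inf.mp hw
  have hzc : ∀ x ∈ S, z ∈ centralizer {x} := by
    intro x hxS
    have := Subgroup.mem_iInf.mp hzC x
    exact Subgroup.mem_iInf.mp this hxS
  have hle : Subgroup.closure (S : Set E) ≤ centralizer {z} := by
    refine (Subgroup.closure_le _).mpr ?_
    intro x hxS
    refine Subgroup.mem_centralizer_singleton_iff.mpr ?_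
    exact (Subgroup.mem_centralizer_singleton_iff.mp (hzc x hxS)).symm
  have hw' : w ∈ centralizer {z} := by
    rw [hSK] at hle
    exact hle hwK
  exact (Subgroup.mem_centralizer_singleton_iff.mp hw').symm
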